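/- Let M_{r,d} = min over 1 ≤ i ≤ d-2 of C^d_{r,i}, where C^d_{r,i} is the coefficient of z^r in (z+i)(z+i-1)···(z+i-(d-1)). Then for d ≥ 3 and 1 ≤ r ≤ d-1, M_{r,d} ≤ 0, with M_{r,d} = 0 only when d = 3 and r = 2. -/

import Mathlib

/-- `Cc d r i` is the coefficient of `z^r` in `(z+i)(z+i-1)⋯(z+i-(d-1))`. -/
noncomputable def Cc (d r : ℕ) (i : ℤ) : ℤ :=
  (∏ j ∈ Finset.range d, (Polynomial.X + Polynomial.C (i - j))).coeff r

open Polynomial Finset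

lemma logderiv (m : ℕ) (z : ℕ → ℝ) (x : ℝ) (hx : ∀ t, t < m → x ≠ z t) :
    eval x (derivative (∏ i ∈ range m, (X - C (z i)))) =
      eval x (∏ i ∈ range m, (X - C (z i))) * ∑ t ∈ range m, (x - z t)⁻¹ := by
  induction m with
  | zero => simp
  | succ n ih =>
    rw [prod_range_succ, derivative_mul, sum_range_succ, derivative_X_sub_C]
    have hxn : x - z n ≠ 0 := sub_ne_zero.mpr (hx n (by omega))
    rw [eval_add, eval_mul, eval_mul, eval_mul, eval_one, ih (fun t ht => hx t (by omega))]
    rw [eval_sub, eval_X, eval_C]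
    field_simp

lemma step (m : ℕ) (hm : 2 ≤ m) (g : ℝ) (hg : 0 < g) (z : ℕ → ℝ)
    (hz : ∀ i, i + 1 < m → g ≤ z (i+1) - z i) :
    ∃ w : ℕ → ℝ,
      (∀ i, i + 1 < m → z i < w i ∧ w i < z (i+1)) ∧
      (∀ i, i + 2 < m → g < w (i+1) - w i) ∧
      derivative (∏ i ∈ range m, (X - C (z i))) =
        C (m : ℝ) * ∏ i ∈ range (m-1), (X - C (w i)) := by
  have monoLe : ∀ i j, i ≤ j → j < m → z i ≤ z j := by
    intro i j hij hj
    induction j with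
    | zero =>
      have : i = 0 := by omega
      simp [this]
    | succ n ihn =>
      rcases Nat.lt_or_ge i (n+1) with h | h
      · have h1 : z i ≤ z n := ihn (by omega) (by omega)
        have h2 := hz n (by omega)
        linarith
      · have : i = n + 1 := by omega
        subst this; rfl
  have mono : ∀ i j, i < j → j < m → z i < z j := by
    intro i j hij hj
    have h1 : z i ≤ z (j-1) := monoLe i (j-1) (by omega) (by omega)
    have h2 := hz (j-1) (by omega)
    have : j - 1 + 1 = j := by omega
    rw [this] at h2
    linarith
  set P : Polynomial ℝ := ∏ i ∈ range m, (X - C (z i)) with hP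
  have evalP : ∀ t, t < m → eval (z t) P = 0 := by
    intro t ht
    rw [hP, eval_prod]
    apply prod_eq_zero (mem_range.mpr ht)
    simp
  have hex : ∀ i, ∃ c, i + 1 < m → (z i < c ∧ c < z (i+1) ∧ eval c (derivative P) = 0) := by
    intro i
    by_cases h : i + 1 < m
    · have hab : z i < z (i+1) := mono i (i+1) (by omega) h
      have hcont : ContinuousOn (fun x => eval x P) (Set.Icc (z i) (z (i+1))) :=
        (Polynomial.continuous P).continuousOn
      have heq : eval (z i) P = eval (z (i+1)) P := by
        rw [evalP i (by omega), evalP (i+1) h]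
      obtain ⟨c, hc, hc0⟩ := exists_deriv_eq_zero hab hcont heq
      refine ⟨c, fun _ => ⟨hc.1, hc.2, ?_⟩⟩
      rwa [Polynomial.deriv] at hc0
    · exact ⟨0, fun h' => absurd h' h⟩
  choose w hw using hex
  have hI : ∀ i, i + 1 < m → z i < w i ∧ w i < z (i+1) ∧ eval (w i) (derivative P) = 0 := hw
  refine ⟨w, fun i h => ⟨(hI i h).1, (hI i h).2.1⟩, ?_, ?_⟩
  · -- gap property
    intro i hi
    by_contra hcon
    push_neg at hcon
    set y := w i with hy
    set x := w (i+1) with hx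
    have hyI := hI i (by omega)
    have hxI := hI (i+1) hi
    have hxy : x ≤ y + g := by linarith
    have hxlt : z (i+1) < x := hxI.1
    have hxlt2 : x < z (i+2) := hxI.2.1
    have hynr : ∀ t, t < m → y ≠ z t := by
      intro t ht hc
      rcases Nat.lt_or_ge t (i+1) with h | h
      · have h1 : z t ≤ z i := monoLe t i (by omega) (by omega)
        have h2 := hyI.1
        rw [← hy] at h2
        linarith [hc.ge, hc.le]
      · have h1 : z (i+1) ≤ z t := monoLe (i+1) t h ht
        have h2 := hyI.2.1
        rw [← hy] at h2
        linarith [hc.ge, hc.le]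
    have hxnr : ∀ t, t < m → x ≠ z t := by
      intro t ht
      rcases Nat.lt_or_ge t (i+2) with h | h
      · have h1 : z t ≤ z (i+1) := monoLe t (i+1) (by omega) (by omega)
        intro hc
        linarith [hc.ge, hc.le]
      · have h1 : z (i+2) ≤ z t := monoLe (i+2) t h ht
        intro hc
        linarith [hc.ge, hc.le]
    have hPy : eval y P ≠ 0 := by
      rw [hP, eval_prod]
      apply prod_ne_zero_iff.mpr
      intro t ht
      simp only [eval_sub, eval_X, eval_C]
      exact sub_ne_zero.mpr (hynr t (mem_range.mp ht))
    have hPx : eval x P ≠ 0 := by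
      rw [hP, eval_prod]
      apply prod_ne_zero_iff.mpr
      intro t ht
      simp only [eval_sub, eval_X, eval_C]
      exact sub_ne_zero.mpr (hxnr t (mem_range.mp ht))
    have hΦy : ∑ t ∈ range m, (y - z t)⁻¹ = 0 := by
      have := logderiv m z y hynr
      rw [hyI.2.2] at this
      exact (mul_eq_zero.mp this.symm).resolve_left hPy
    have hΦx : ∑ t ∈ range m, (x - z t)⁻¹ = 0 := by
      have := logderiv m z x hxnr
      rw [hxI.2.2] at this
      exact (mul_eq_zero.mp this.symm).resolve_left hPx
    -- now derive positivity contradiction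
    have key : ∀ t ∈ Ico 1 m, (y - z (t-1))⁻¹ ≤ (x - z t)⁻¹ := by
      intro t ht
      rw [mem_Ico] at ht
      obtain ⟨ht1, ht2⟩ := ht
      have hgap := hz (t-1) (by omega)
      have htt : t - 1 + 1 = t := by omega
      rw [htt] at hgap
      have hstep : x - z t ≤ y - z (t-1) := by linarith
      rcases Nat.lt_or_ge t (i+2) with h | h
      · -- t ≤ i+1, both positive
        have h1 : z t ≤ z (i+1) := monoLe t (i+1) (by omega) (by omega)
        have hpos : 0 < x - z t := by linarith
        have := one_div_le_one_div_of_le hpos hstep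
        simpa [one_div] using this
      · -- t ≥ i+2, both negative
        have h1 : z (i+2) ≤ z t := monoLe (i+2) t h ht2
        have h2 : z (i+1) ≤ z (t-1) := monoLe (i+1) (t-1) (by omega) (by omega)
        have hnx : x - z t < 0 := by linarith
        have hny : y - z (t-1) < 0 := by linarith [hyI.2.1]
        have h3 : 0 < -(y - z (t-1)) := by linarith
        have h4 : -(y - z (t-1)) ≤ -(x - z t) := by linarith
        have := one_div_le_one_div_of_le h3 h4
        simp only [one_div, ← inv_neg, neg_neg] at this
        rw [inv_neg, inv_neg] at this
        linarith
    have hsum1 : ∑ t ∈ Ico 1 m, (y - z (t-1))⁻¹ ≤ ∑ t ∈ Ico 1 m, (x - z t)⁻¹ :=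
      Finset.sum_le_sum key
    have hre : ∑ t ∈ Ico 1 m, (y - z (t-1))⁻¹ = ∑ t ∈ range (m-1), (y - z t)⁻¹ := by
      rw [Finset.sum_Ico_eq_sum_range]
      apply Finset.sum_congr rfl
      intro t _
      have ht : 1 + t - 1 = t := by omega
      rw [ht]
    have hΦy' : ∑ t ∈ range (m-1), (y - z t)⁻¹ = -(y - z (m-1))⁻¹ := by
      have : ∑ t ∈ range m, (y - z t)⁻¹ = ∑ t ∈ range (m-1), (y - z t)⁻¹ + (y - z (m-1))⁻¹ := by
        have hm' : m = (m-1) + 1 := by omega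
        rw [hm', sum_range_succ]
        simp only [← hm']
      rw [this] at hΦy
      linarith
    have hx0 : 0 < x - z 0 := by
      have : z 0 ≤ z (i+1) := monoLe 0 (i+1) (by omega) (by omega)
      linarith
    have hym : y - z (m-1) < 0 := by
      have : z (i+1) ≤ z (m-1) := monoLe (i+1) (m-1) (by omega) (by omega)
      linarith [hyI.2.1]
    have hsplit : ∑ t ∈ range m, (x - z t)⁻¹ = (x - z 0)⁻¹ + ∑ t ∈ Ico 1 m, (x - z t)⁻¹ := by
      rw [range_eq_Ico, Finset.sum_eq_sum_Ico_succ_bot (by omega : 0 < m)]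
    have : (0:ℝ) < ∑ t ∈ range m, (x - z t)⁻¹ := by
      rw [hsplit]
      have h1 : (0:ℝ) < (x - z 0)⁻¹ := inv_pos.mpr hx0
      have h2 : (0:ℝ) < -(y - z (m-1))⁻¹ := by
        rw [neg_pos]
        exact inv_lt_zero.mpr hym
      calc (0:ℝ) < (x - z 0)⁻¹ + -(y - z (m-1))⁻¹ := by linarith
        _ = (x - z 0)⁻¹ + ∑ t ∈ range (m-1), (y - z t)⁻¹ := by rw [hΦy']
        _ = (x - z 0)⁻¹ + ∑ t ∈ Ico 1 m, (y - z (t-1))⁻¹ := by rw [hre]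
        _ ≤ (x - z 0)⁻¹ + ∑ t ∈ Ico 1 m, (x - z t)⁻¹ := by linarith
    rw [hΦx] at this
    exact lt_irrefl _ this
  · -- the derivative formula
    have wmono : ∀ i j, i < j → j < m - 1 → w i < w j := by
      intro i j hij hj
      have h1 := (hI i (by omega)).2.1
      have h2 := (hI j (by omega)).1
      have h3 : z (i+1) ≤ z j := monoLe (i+1) j (by omega) (by omega)
      linarith
    have MonP : P.Monic := monic_prod_of_monic _ _ fun i _ => monic_X_sub_C _
    have degP : P.natDegree = m := by
      rw [hP, natDegree_prod_of_monic _ _ fun i _ => monic_X_sub_C _]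
      simp [natDegree_X_sub_C]
    set W : Polynomial ℝ := ∏ i ∈ range (m-1), (X - C (w i)) with hW
    have MonW : W.Monic := monic_prod_of_monic _ _ fun i _ => monic_X_sub_C _
    have degW : W.natDegree = m - 1 := by
      rw [hW, natDegree_prod_of_monic _ _ fun i _ => monic_X_sub_C _]
      simp [natDegree_X_sub_C]
    set q : Polynomial ℝ := derivative P - C (m:ℝ) * W with hq
    have hdegDP : (derivative P).natDegree ≤ m - 1 := by
      have := natDegree_derivative_le P
      omega
    have hdegQ : (C (m:ℝ) * W).natDegree ≤ m - 1 := by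
      have := natDegree_C_mul_le (m:ℝ) W
      omega
    have hcoeffDP : (derivative P).coeff (m-1) = (m:ℝ) := by
      rw [coeff_derivative]
      have h1 : m - 1 + 1 = m := by omega
      rw [h1]
      have h2 : P.coeff m = 1 := by
        have := MonP.leadingCoeff
        rwa [leadingCoeff, degP] at this
      rw [h2, one_mul]
      norm_cast
    have hcoeffQ : (C (m:ℝ) * W).coeff (m-1) = (m:ℝ) := by
      rw [coeff_C_mul]
      have h2 : W.coeff (m-1) = 1 := by
        have := MonW.leadingCoeff
        rwa [leadingCoeff, degW] at this
      rw [h2, mul_one]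
    have hqcoeff : q.coeff (m-1) = 0 := by
      rw [hq, coeff_sub, hcoeffDP, hcoeffQ, sub_self]
    have hqdeg : q.natDegree ≤ m - 1 := le_trans (natDegree_sub_le _ _) (by omega)
    have hqeval : ∀ i, i < m - 1 → q.eval (w i) = 0 := by
      intro i hi
      rw [hq, eval_sub, (hI i (by omega)).2.2, eval_mul, hW, eval_prod]
      rw [prod_eq_zero (mem_range.mpr hi)]
      · ring
      · simp
    have hq0 : q = 0 := by
      by_contra hne
      have hlt : q.natDegree < m - 1 := by
        rcases lt_or_eq_of_le hqdeg with h | h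
        · exact h
        · exfalso
          have := Polynomial.leadingCoeff_ne_zero.mpr hne
          rw [leadingCoeff, h] at this
          exact this hqcoeff
      have hcard : #((range (m-1)).image w) = m - 1 := by
        rw [Finset.card_image_of_injOn, card_range]
        intro i hi j hj hij
        rcases lt_trichotomy i j with h | h | h
        · exact absurd hij (ne_of_lt (wmono i j h (mem_range.mp hj)))
        · exact h
        · exact absurd hij.symm (ne_of_lt (wmono j i h (mem_range.mp hi)))
      apply hne
      apply Polynomial.eq_zero_of_natDegree_lt_card_of_eval_eq_zero' q ((range (m-1)).image w)
      · intro x hx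
        obtain ⟨i, hi, rfl⟩ := Finset.mem_image.mp hx
        exact hqeval i (mem_range.mp hi)
      · omega
    have := sub_eq_zero.mp hq0
    rw [this]


lemma chain (d : ℕ) (hd : 3 ≤ d) : ∀ r : ℕ, 1 ≤ r → r ≤ d - 2 →
    ∃ (A : ℝ) (w : ℕ → ℝ), 0 < A ∧
      (∀ i, i + 2 < d - r + 1 → 1 < w (i+1) - w i) ∧
      0 < w 0 ∧ w (d - r - 1) < (d:ℝ) - 1 ∧
      derivative^[r] (∏ j ∈ range d, (X - C (j:ℝ))) =
        C A * ∏ i ∈ range (d - r), (X - C (w i)) := by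
  intro r
  induction r with
  | zero => omega
  | succ n ih =>
    intro _ hn1
    rcases Nat.eq_zero_or_pos n with hn | hn
    · -- base case r = 1
      subst hn
      obtain ⟨w, hI, hG, hD⟩ := step d (by omega) 1 one_pos (fun i => (i:ℝ))
        (fun i _ => by push_cast; linarith)
      refine ⟨(d:ℝ), w, by positivity, ?_, ?_, ?_, ?_⟩
      · intro i hi
        exact hG i (by omega)
      · have := (hI 0 (by omega)).1
        simpa using this
      · have := (hI (d-1-1) (by omega)).2
        have he : d - 1 - 1 + 1 = d - 1 := by omega
        rw [he] at this
        calc w (d - 1 - 1) < ((d-1 : ℕ) : ℝ) := this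
          _ = (d:ℝ) - 1 := by
            push_cast [Nat.cast_sub (by omega : 1 ≤ d)]
            ring
      · simpa using hD
    · -- inductive step
      obtain ⟨A, w, hA, hG, h0, hlast, hD⟩ := ih hn (by omega)
      set m := d - n with hm
      have hm2 : 3 ≤ m := by omega
      obtain ⟨v, hI, hG', hD'⟩ := step m (by omega) 1 one_pos w
        (fun i hi => le_of_lt (hG i (by omega)))
      have hmono : ∀ a b, a ≤ b → b < m → w a ≤ w b := by
        intro a b hab hb
        induction b with
        | zero => exact le_of_eq (congrArg w (by omega : a = 0))
        | succ c ihc =>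
          rcases Nat.lt_or_ge a (c+1) with h | h
          · have h1 : w a ≤ w c := ihc (by omega) (by omega)
            have h2 := hG c (by omega)
            linarith
          · have : a = c + 1 := by omega
            subst this; rfl
      refine ⟨A * m, v, by positivity, ?_, ?_, ?_, ?_⟩
      · intro i hi
        have : d - (n+1) = m - 1 := by omega
        exact hG' i (by omega)
      · have := (hI 0 (by omega)).1
        linarith
      · have hidx : d - (n+1) - 1 + 1 = m - 1 := by omega
        have := (hI (d - (n+1) - 1) (by omega)).2
        rw [hidx] at this
        linarith
      · rw [Function.iterate_succ_apply', hD, derivative_C_mul, hD', ← mul_assoc, ← C_mul]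
        have : d - (n+1) = m - 1 := by omega
        rw [this]

lemma neg_eval (d r : ℕ) (hd : 3 ≤ d) (hr1 : 1 ≤ r) (hrd : r ≤ d - 2) :
    ∃ i : ℕ, 1 ≤ i ∧ i ≤ d - 2 ∧
      eval ((i:ℝ)) (derivative^[r] (∏ j ∈ range d, (X - C (j:ℝ)))) < 0 := by
  obtain ⟨A, w, hA, hG, h0, hlast, hD⟩ := chain d hd r hr1 hrd
  set k := d - r with hk
  have hk2 : 2 ≤ k := by omega
  have mono : ∀ a b, a ≤ b → b < k → w a ≤ w b := by
    intro a b hab hb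
    induction b with
    | zero => exact le_of_eq (congrArg w (by omega : a = 0))
    | succ c ihc =>
      rcases Nat.lt_or_ge a (c+1) with h | h
      · have h1 : w a ≤ w c := ihc (by omega) (by omega)
        have h2 := hG c (by omega)
        linarith
      · exact le_of_eq (congrArg w (by omega : a = c + 1))
  set j := if k % 2 = 0 then 0 else 1 with hj
  have hjk : j + 1 < k := by
    rw [hj]; split_ifs with h <;> omega
  have hgap : 1 < w (j+1) - w j := hG j (by omega)
  set xz : ℤ := ⌊w j⌋ + 1 with hxz
  set x : ℝ := (xz : ℝ) with hx
  have hx1 : w j < x := by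
    rw [hx, hxz]; push_cast; exact Int.lt_floor_add_one (w j)
  have hx2 : x ≤ w j + 1 := by
    rw [hx, hxz]; push_cast
    have := Int.floor_le (w j); linarith
  have hx3 : x < w (j+1) := by linarith
  have hw0 : w 0 ≤ w j := mono 0 j (by omega) (by omega)
  have hwlast : w (j+1) ≤ w (k-1) := mono (j+1) (k-1) (by omega) (by omega)
  have hxpos : (0:ℝ) < x := by linarith
  have hxlt : x < (d:ℝ) - 1 := by linarith
  have hz1 : 1 ≤ xz := by
    by_contra h
    push_neg at h
    have : (xz:ℝ) ≤ 0 := by exact_mod_cast (by omega : xz ≤ 0)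
    linarith
  have hz2 : xz ≤ (d:ℤ) - 2 := by
    by_contra h
    push_neg at h
    have : ((d:ℤ) - 1 : ℤ) ≤ xz := by omega
    have : ((d:ℝ) - 1) ≤ (xz:ℝ) := by exact_mod_cast this
    linarith
  have hb1 : 1 ≤ xz.toNat := by omega
  have hb2 : xz.toNat ≤ d - 2 := by
    have h' : (xz.toNat : ℤ) ≤ (d:ℤ) - 2 := by
      rw [Int.toNat_of_nonneg (by omega)]; exact hz2
    omega
  refine ⟨xz.toNat, hb1, hb2, ?_⟩
  have hcast : ((xz.toNat : ℕ) : ℝ) = x := by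
    have h := Int.toNat_of_nonneg (by omega : (0:ℤ) ≤ xz)
    rw [hx, ← h]
    norm_cast
  rw [hcast, hD, eval_mul, eval_C, eval_prod]
  simp only [eval_sub, eval_X, eval_C]
  have hsplit : ∏ l ∈ range k, (x - w l) =
      (∏ l ∈ range (j+1), (x - w l)) * ∏ l ∈ Ico (j+1) k, (x - w l) := by
    rw [range_eq_Ico, range_eq_Ico, Finset.prod_Ico_consecutive _ (by omega : 0 ≤ j+1) (le_of_lt hjk)]
  have pos1 : 0 < ∏ l ∈ range (j+1), (x - w l) := by
    apply prod_pos
    intro l hl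
    have hl' := mem_range.mp hl
    have : w l ≤ w j := mono l j (by omega) (by omega)
    linarith
  have hneg : ∀ l ∈ Ico (j+1) k, x - w l < 0 := by
    intro l hl
    rw [mem_Ico] at hl
    have : w (j+1) ≤ w l := mono (j+1) l hl.1 hl.2
    linarith
  have hrw : ∏ l ∈ Ico (j+1) k, (x - w l) =
      (-1)^(k - (j+1)) * ∏ l ∈ Ico (j+1) k, (w l - x) := by
    rw [← Nat.card_Ico (j+1) k, ← prod_const, ← prod_mul_distrib]
    apply prod_congr rfl
    intro l _
    ring
  have pos2 : 0 < ∏ l ∈ Ico (j+1) k, (w l - x) := by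
    apply prod_pos
    intro l hl
    have := hneg l hl
    linarith
  have hodd : (-1:ℝ)^(k - (j+1)) = -1 := by
    apply Odd.neg_one_pow
    rw [Nat.odd_iff]
    rw [hj]
    rcases Nat.even_or_odd k with he | ho
    · rw [Nat.even_iff] at he
      simp [he]
      omega
    · rw [Nat.odd_iff] at ho
      simp [ho]
      omega
  rw [hsplit, hrw, hodd]
  have : (∏ l ∈ range (j+1), (x - w l)) * (-1 * ∏ l ∈ Ico (j+1) k, (w l - x)) < 0 := by
    nlinarith
  nlinarith

lemma Cc_eq_hasse (d r : ℕ) (i : ℤ) :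
    Cc d r i = (hasseDeriv r (∏ j ∈ range d, (X - C (j:ℤ)))).eval i := by
  rw [Cc, ← taylor_coeff]
  congr 1
  rw [taylor_apply, Polynomial.prod_comp]
  apply prod_congr rfl
  intro j _
  rw [sub_comp, X_comp, C_comp, map_sub]
  ring

lemma Cc_factorial (d r : ℕ) (i : ℤ) :
    (r.factorial : ℤ) * Cc d r i =
      (derivative^[r] (∏ j ∈ range d, (X - C (j:ℤ)))).eval i := by
  rw [Cc_eq_hasse]
  have h := Polynomial.factorial_smul_hasseDeriv (R := ℤ) (k := r)
  have h2 : (r.factorial • hasseDeriv r (∏ j ∈ range d, (X - C (j:ℤ)))) =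
      derivative^[r] (∏ j ∈ range d, (X - C (j:ℤ))) := by
    rw [← h]; rfl
  rw [← h2]
  simp [nsmul_eq_mul]

lemma cast_eval (d r : ℕ) (i : ℤ) :
    (((derivative^[r] (∏ j ∈ range d, (X - C (j:ℤ)))).eval i : ℤ) : ℝ) =
      eval ((i:ℝ)) (derivative^[r] (∏ j ∈ range d, (X - C (j:ℝ)))) := by
  have hmap : (∏ j ∈ range d, (X - C (j:ℤ))).map (Int.castRingHom ℝ) =
      ∏ j ∈ range d, (X - C (j:ℝ)) := by
    rw [Polynomial.map_prod]
    apply prod_congr rfl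
    intro j _
    simp
  rw [← hmap, Polynomial.iterate_derivative_map, eval_intCast_map]
  simp

lemma Cc_neg (d r : ℕ) (hd : 3 ≤ d) (hr1 : 1 ≤ r) (hrd : r ≤ d - 2) :
    ∃ i : ℕ, 1 ≤ i ∧ i ≤ d - 2 ∧ Cc d r (i:ℤ) < 0 := by
  obtain ⟨i, hi1, hi2, hev⟩ := neg_eval d r hd hr1 hrd
  refine ⟨i, hi1, hi2, ?_⟩
  have h1 := Cc_factorial d r (i:ℤ)
  have h2 := cast_eval d r (i:ℤ)
  rw [← h1] at h2
  have h3 : (((i:ℤ) : ℝ)) = ((i:ℕ):ℝ) := by push_cast; rfl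
  rw [h3] at h2
  rw [← h2] at hev
  have h4 : ((r.factorial : ℤ) * Cc d r (i:ℤ) : ℤ) < 0 := by exact_mod_cast hev
  by_contra h
  push_neg at h
  have : (0:ℤ) ≤ (r.factorial : ℤ) * Cc d r (i:ℤ) :=
    mul_nonneg (by positivity) h
  omega

lemma k1case (d : ℕ) (hd4 : 4 ≤ d) : Cc d (d-1) 1 < 0 := by
  have hprod : ∏ j ∈ range d, (X + C ((1:ℤ) - (j:ℤ))) =
      ∏ j ∈ range d, (X - C ((j:ℤ) - 1)) := by
    apply prod_congr rfl
    intro j _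
    simp only [map_sub, map_add, map_neg, map_one, map_natCast]
    ring
  rw [Cc, hprod]
  have hc := prod_X_sub_C_coeff_card_pred (range d) (fun j => (j:ℤ) - 1)
      (by simp; omega : 0 < #(range d))
  rw [card_range] at hc
  rw [hc]
  have hsum : ∑ j ∈ range d, ((j:ℤ) - 1) = (∑ j ∈ range d, (j:ℕ) : ℕ) - d := by
    rw [Finset.sum_sub_distrib]
    push_cast
    simp
  rw [hsum]
  have h1 := Finset.sum_range_id_mul_two d
  have h2 : d * 3 ≤ d * (d-1) := Nat.mul_le_mul_left d (by omega)
  have h3 : d < ∑ j ∈ range d, j := by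
    have hd0 : 0 < d := by omega
    linarith
  have : (d:ℤ) < (∑ j ∈ range d, j : ℕ) := by exact_mod_cast h3
  linarith

lemma exceptional : Cc 3 2 1 = 0 := by
  have : ∏ j ∈ range 3, (X + C ((1:ℤ) - (j:ℤ))) = X^3 - X := by
    rw [show (3:ℕ) = 2 + 1 from rfl, prod_range_succ, prod_range_succ, prod_range_one]
    norm_num
    ring
  rw [Cc, this]
  simp [coeff_X]

theorem stmt_7 (d r : ℕ) (hd : 3 ≤ d) (hr1 : 1 ≤ r) (hr2 : r ≤ d - 1) (M : ℤ)
    (hM : IsLeast {x : ℤ | ∃ i : ℕ, 1 ≤ i ∧ i ≤ d - 2 ∧ x = Cc d r (i : ℤ)} M) :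
    M ≤ 0 ∧ (M = 0 → d = 3 ∧ r = 2) := by
  by_cases hex : d = 3 ∧ r = 2
  · obtain ⟨hd3, hr2'⟩ := hex
    subst hd3; subst hr2'
    obtain ⟨i, hi1, hi2, hMe⟩ := hM.1
    have hi : i = 1 := by omega
    subst hi
    rw [hMe, show ((1:ℕ):ℤ) = 1 from rfl, exceptional]
    exact ⟨le_refl 0, fun _ => ⟨rfl, rfl⟩⟩
  · have hwit : ∃ i : ℕ, 1 ≤ i ∧ i ≤ d - 2 ∧ Cc d r (i:ℤ) < 0 := by
      rcases Nat.lt_or_ge r (d-1) with h | h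
      · exact Cc_neg d r hd hr1 (by omega)
      · have hr : r = d - 1 := by omega
        have hd4 : 4 ≤ d := by
          rcases eq_or_ne d 3 with h3 | h3
          · exact absurd ⟨h3, by omega⟩ hex
          · omega
        subst hr
        exact ⟨1, le_refl 1, by omega, by exact_mod_cast k1case d hd4⟩
    obtain ⟨i, hi1, hi2, hneg⟩ := hwit
    have hle : M ≤ Cc d r (i:ℤ) := hM.2 ⟨i, hi1, hi2, rfl⟩
    constructor
    · omega
    · intro h0
      omega
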